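/- Let R be a commutative ring, n a natural number, E the exterior algebra of Fin n → R (the Clifford algebra of the zero quadratic form) with ordered basis products v_I, and suppose hB is an R-basis of E indexed by Finset (Fin n) with hB(I) = v_I for every I. Let π : E → R be the coordinate functional of hB at the index univ, and define the bilinear form B(x, y) = π(reverse(x) · y) on E. Then the left contraction operators are self-adjoint for B: for every g in the dual module of Fin n → R and all x, y ∈ E, π( reverse(x) · (g ⌋ y) ) = π( reverse(g ⌋ x) · y ), where g ⌋ (−) is the contraction operator (CliffordAlgebra.contractLeft for the zero quadratic form) determined by g ⌋ 1 = 0 and g ⌋ (ι(m)·w) = g(m) • w − ι(m)·(g ⌋ w). -/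

import Mathlib

open CliffordAlgebra

/-- The ordered basis product `v_I` in the exterior algebra of `Fin n → R`, realized as the
Clifford algebra of the zero quadratic form: the product, in increasing order of indices,
of the generators `ι (Pi.single i 1)` for `i ∈ I`. -/
noncomputable def vI {R : Type*} [CommRing R] {n : ℕ} (I : Finset (Fin n)) :
    CliffordAlgebra (0 : QuadraticForm R (Fin n → R)) :=
  ((I.sort (· ≤ ·)).map fun i =>
    CliffordAlgebra.ι (0 : QuadraticForm R (Fin n → R)) (Pi.single i (1 : R))).prod

section aux

variable {R : Type*} [CommRing R] {n : ℕ}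

local notation "Q0" => (0 : QuadraticForm R (Fin n → R))

lemma vI_empty : vI (R := R) (n := n) ∅ = 1 := by
  simp [vI]

lemma vI_insert {a : Fin n} {J : Finset (Fin n)} (h₁ : ∀ b ∈ J, a ≤ b) (h₂ : a ∉ J) :
    CliffordAlgebra.ι Q0 (Pi.single a (1 : R)) * vI J = vI (insert a J) := by
  rw [vI, vI, Finset.sort_insert _ h₁ h₂, List.map_cons, List.prod_cons]

/-- Contraction of `vI I` lies in the span of the `vI J` for strict subsets `J ⊂ I`. -/
lemma contract_vI_mem (g : Module.Dual R (Fin n → R)) (I : Finset (Fin n)) :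
    contractLeft (Q := Q0) g (vI I) ∈
      Submodule.span R (vI (R := R) (n := n) '' {J | J ⊂ I}) := by
  induction I using Finset.strongInduction with
  | _ I ih =>
    rcases eq_or_ne I ∅ with rfl | hne
    · rw [vI_empty, contractLeft_one]
      exact Submodule.zero_mem _
    · have hne' : I.Nonempty := Finset.nonempty_iff_ne_empty.mpr hne
      set a := I.min' hne' with ha
      set I' := I.erase a with hI'
      have haI : a ∈ I := I.min'_mem hne'
      have hstrict : I' ⊂ I := Finset.erase_ssubset haI
      have hins : insert a I' = I := Finset.insert_erase haI
      have hle : ∀ b ∈ I', a ≤ b := fun b hb =>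
        I.min'_le b (Finset.mem_of_mem_erase hb)
      have hnotmem : a ∉ I' := Finset.notMem_erase a I
      have hvI : vI (R := R) I = CliffordAlgebra.ι Q0 (Pi.single a (1 : R)) * vI I' := by
        rw [vI_insert hle hnotmem, hins]
      rw [hvI, contractLeft_ι_mul]
      refine sub_mem ?_ ?_
      · exact Submodule.smul_mem _ _ (Submodule.subset_span ⟨I', hstrict, rfl⟩)
      · have hmem := ih I' hstrict
        refine Submodule.span_induction
          (p := fun z _ => CliffordAlgebra.ι Q0 (Pi.single a (1 : R)) * z ∈
            Submodule.span R (vI (R := R) (n := n) '' {J | J ⊂ I}))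
          ?_ ?_ ?_ ?_ hmem
        · rintro _ ⟨J, hJ, rfl⟩
          have hJI' : J ⊂ I' := hJ
          have hle' : ∀ b ∈ J, a ≤ b := fun b hb => hle b (hJI'.1 hb)
          have hnm : a ∉ J := fun h => hnotmem (hJI'.1 h)
          rw [vI_insert hle' hnm]
          refine Submodule.subset_span ⟨insert a J, ?_, rfl⟩
          have : insert a J ⊆ I := by
            rw [← hins]; exact Finset.insert_subset_insert _ hJI'.1
          refine Finset.ssubset_iff_of_subset this |>.mpr ?_
          obtain ⟨c, hcI', hcJ⟩ := Finset.exists_of_ssubset hJI'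
          refine ⟨c, (hins ▸ Finset.subset_insert a I') hcI', ?_⟩
          simp only [Finset.mem_insert]
          rintro (rfl | hc)
          · exact hnotmem hcI'
          · exact hcJ hc
        · simp
        · intro u v _ _ hu hv
          rw [mul_add]; exact Submodule.add_mem _ hu hv
        · intro r u _ hu
          rw [mul_smul_comm]; exact Submodule.smul_mem _ _ hu

/-- The top coordinate functional kills any contraction. -/
lemma coord_contract (hB : Module.Basis (Finset (Fin n)) R (CliffordAlgebra Q0))
    (hBv : ∀ I : Finset (Fin n), hB I = vI I)
    (g : Module.Dual R (Fin n → R)) (z : CliffordAlgebra Q0) :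
    hB.coord Finset.univ (contractLeft (Q := Q0) g z) = 0 := by
  have key : (hB.coord Finset.univ).comp
      ((contractLeft (Q := Q0) g) : CliffordAlgebra Q0 →ₗ[R] CliffordAlgebra Q0) = 0 := by
    refine hB.ext fun I => ?_
    rw [LinearMap.comp_apply, hBv I, LinearMap.zero_apply]
    have hmem := contract_vI_mem g I
    refine Submodule.span_induction
      (p := fun z _ => hB.coord Finset.univ z = 0) ?_ ?_ ?_ ?_ hmem
    · rintro _ ⟨J, hJ, rfl⟩
      have hJu : J ≠ Finset.univ :=
        (Finset.ssubset_of_ssubset_of_subset hJ (Finset.subset_univ I)).ne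
      rw [← hBv J, Module.Basis.coord_apply, Module.Basis.repr_self, Finsupp.single_apply, if_neg hJu]
    · simp
    · intro u v _ _ hu hv; rw [map_add, hu, hv, add_zero]
    · intro r u _ hu; rw [map_smul, hu, smul_zero]
  exact LinearMap.congr_fun key z

/-- Leibniz rule for left contraction on the Clifford algebra of `0`. -/
lemma contract_mul (g : Module.Dual R (Fin n → R))
    (a y : CliffordAlgebra Q0) :
    contractLeft (Q := Q0) g (a * y) =
      contractLeft (Q := Q0) g a * y + involute a * contractLeft (Q := Q0) g y := by
  induction a using CliffordAlgebra.left_induction generalizing y with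
  | algebraMap r =>
    simp [contractLeft_algebraMap_mul, contractLeft_algebraMap, Algebra.smul_def]
  | add u v hu hv =>
    rw [add_mul, map_add, hu, hv, map_add, add_mul, map_add, add_mul]
    abel
  | ι_mul x m hx =>
    rw [mul_assoc, contractLeft_ι_mul, contractLeft_ι_mul, hx, map_mul, involute_ι]
    simp only [smul_sub, smul_mul_assoc, sub_mul, mul_add, neg_mul, mul_neg, mul_assoc]
    abel

/-- `reverse` of a contraction, in terms of contraction of `involute ∘ reverse`. -/
lemma reverse_contract (g : Module.Dual R (Fin n → R)) (b : CliffordAlgebra Q0) :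
    reverse (contractLeft (Q := Q0) g b) =
      - contractLeft (Q := Q0) g (involute (reverse b)) := by
  induction b using CliffordAlgebra.left_induction with
  | algebraMap r =>
    rw [contractLeft_algebraMap, map_zero, reverse.commutes, involute.commutes,
      contractLeft_algebraMap, neg_zero]
  | add u v hu hv =>
    rw [map_add, map_add, hu, hv, map_add, map_add, map_add, neg_add]
  | ι_mul x m hx =>
    rw [contractLeft_ι_mul, map_sub, map_smul, reverse.map_mul, reverse_ι, hx,
      reverse.map_mul, reverse_ι, map_mul, involute_ι, mul_neg, map_neg,
      contract_mul, involute_involute, contractLeft_ι, neg_neg, neg_mul,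
      ← Algebra.commutes (g m) (reverse x), ← Algebra.smul_def]
    abel

end aux

/-- The left contraction operators `d_g = g ⌋ (−)` are self-adjoint for the bilinear form
`b_∧(x, y) = π(reverse x * y)` on the exterior algebra. -/
theorem contractLeft_self_adjoint {R : Type*} [CommRing R] {n : ℕ}
    (hB : Module.Basis (Finset (Fin n)) R (CliffordAlgebra (0 : QuadraticForm R (Fin n → R))))
    (hBv : ∀ I : Finset (Fin n), hB I = vI I)
    (g : Module.Dual R (Fin n → R))
    (x y : CliffordAlgebra (0 : QuadraticForm R (Fin n → R))) :
    hB.coord Finset.univ (reverse x * contractLeft (Q := (0 : QuadraticForm R (Fin n → R))) g y) =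
      hB.coord Finset.univ
        (reverse (contractLeft (Q := (0 : QuadraticForm R (Fin n → R))) g x) * y) := by
  have hE := contract_mul g (involute (reverse x)) y
  rw [involute_involute] at hE
  have hD : contractLeft (Q := (0 : QuadraticForm R (Fin n → R))) g (involute (reverse x)) =
      - reverse (contractLeft (Q := (0 : QuadraticForm R (Fin n → R))) g x) := by
    rw [reverse_contract, neg_neg]
  rw [hD, neg_mul] at hE
  have h0 := coord_contract hB hBv g (involute (reverse x) * y)
  rw [hE, map_add, map_neg] at h0
  linear_combination h0
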